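/- For all complex numbers k ≠ -2, the point (c, λ) with c = 2(k-1)/(k+2) and λ = (k+1)/((k-2)(3k+4)) (when k ≠ 2, -4/3) satisfies the polynomial equation 4λ(c+7)(2c-1) + (c-2)(c+4) = 0. -/

import Mathlib

/-- The parafermion algebra `N^k(sl_2)` truncation curve: for `k ≠ -2, 2, -4/3`,
the point `(c, λ)` with `c = 2(k-1)/(k+2)`, `λ = (k+1)/((k-2)(3k+4))` satisfies
`4λ(c+7)(2c-1) + (c-2)(c+4) = 0`. -/
theorem stmt0 (k : ℂ) (hk : k ≠ -2) (hk2 : k ≠ 2) (hk3 : k ≠ -4/3)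
    (c l : ℂ)
    (hc : c = 2*(k-1)/(k+2))
    (hl : l = (k+1)/((k-2)*(3*k+4))) :
    4*l*(c+7)*(2*c-1) + (c-2)*(c+4) = 0 := by
  have h1 : k + 2 ≠ 0 := by intro h; apply hk; linear_combination h
  have h2 : k - 2 ≠ 0 := by intro h; apply hk2; linear_combination h
  have h3 : 3*k + 4 ≠ 0 := by intro h; apply hk3; linear_combination h/3
  subst hc hl
  field_simp
  ring_nf
  have h3' : (4 + k*3 : ℂ) ≠ 0 := by rwa [add_comm, mul_comm]
  field_simp
  ring
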